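/- Let B be an integral domain containing ℚ, D : B → B a locally nilpotent derivation with kernel A, and s ∈ B such that D(s) is a unit of B. Then B = A[s] and B is a polynomial ring in the single variable s over A. -/

import Mathlib

open Polynomial Finset

def IsLND {B : Type*} [CommRing B] (D : B → B) : Prop :=
  (∀ a b : B, D (a + b) = D a + D b) ∧
  (∀ a b : B, D (a * b) = a * D b + D a * b) ∧
  (∀ x : B, ∃ n : ℕ, D^[n] x = 0)

section aux

variable {B : Type*} [CommRing B] {D : B → B} (hD : IsLND D)
include hD

theorem lnd_zero : D 0 = 0 := by
  have h := hD.1 0 0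
  rw [add_zero] at h
  exact left_eq_add.mp h

theorem lnd_one : D 1 = 0 := by
  have h := hD.2.1 1 1
  rw [mul_one, one_mul, mul_one] at h
  exact left_eq_add.mp h

theorem lnd_neg (x : B) : D (-x) = - D x := by
  have h := hD.1 x (-x)
  rw [add_neg_cancel, lnd_zero hD] at h
  exact eq_neg_of_add_eq_zero_right h.symm

theorem lnd_sub (x y : B) : D (x - y) = D x - D y := by
  rw [sub_eq_add_neg, hD.1, lnd_neg hD, sub_eq_add_neg]

theorem lnd_sum {ι : Type*} (t : Finset ι) (f : ι → B) :
    D (∑ i ∈ t, f i) = ∑ i ∈ t, D (f i) := by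
  classical
  induction t using Finset.induction with
  | empty => simpa using lnd_zero hD
  | insert a s h ih => rw [Finset.sum_insert h, hD.1, ih, Finset.sum_insert h]

theorem lnd_nsmul (n : ℕ) (x : B) : D (n • x) = n • D x := by
  induction n with
  | zero => simpa using lnd_zero hD
  | succ n ih => rw [succ_nsmul, hD.1, ih, succ_nsmul]

theorem lnd_iter_zero (n : ℕ) : D^[n] 0 = 0 := by
  induction n with
  | zero => rfl
  | succ n ih => rw [Function.iterate_succ_apply', ih, lnd_zero hD]

theorem lnd_iter_stable {x : B} {m : ℕ} (h : D^[m] x = 0) {k : ℕ} (hk : m ≤ k) :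
    D^[k] x = 0 := by
  obtain ⟨j, rfl⟩ := Nat.exists_eq_add_of_le hk
  rw [add_comm, Function.iterate_add_apply, h, lnd_iter_zero hD]

/-- Iterated Leibniz rule. -/
theorem lnd_iterate_mul (a b : B) (n : ℕ) :
    D^[n] (a * b) =
      ∑ k ∈ range n.succ, (n.choose k • (D^[n - k] a * D^[k] b)) := by
  induction n with
  | zero => simp [Finset.range]
  | succ n IH =>
    calc
      D^[n + 1] (a * b) =
          D (∑ k ∈ range n.succ, n.choose k • (D^[n - k] a * D^[k] b)) := by
        rw [Function.iterate_succ_apply', IH]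
      _ = (∑ k ∈ range n.succ,
            n.choose k • (D^[n - k + 1] a * D^[k] b)) +
          ∑ k ∈ range n.succ,
            n.choose k • (D^[n - k] a * D^[k + 1] b) := by
        rw [lnd_sum hD, ← sum_add_distrib]
        refine sum_congr rfl fun k _ => ?_
        rw [lnd_nsmul hD, hD.2.1]
        simp only [Function.iterate_succ_apply', smul_add]
        abel
      _ = (∑ k ∈ range n.succ,
                n.choose k.succ • (D^[n - k] a * D^[k + 1] b)) +
              1 • (D^[n + 1] a * D^[0] b) +
            ∑ k ∈ range n.succ, n.choose k • (D^[n - k] a * D^[k + 1] b) :=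
        ?_
      _ = ((∑ k ∈ range n.succ, n.choose k • (D^[n - k] a * D^[k + 1] b)) +
              ∑ k ∈ range n.succ,
                n.choose k.succ • (D^[n - k] a * D^[k + 1] b)) +
            1 • (D^[n + 1] a * D^[0] b) := by
        rw [add_comm, add_assoc]
      _ = (∑ i ∈ range n.succ,
              (n + 1).choose (i + 1) • (D^[n + 1 - (i + 1)] a * D^[i + 1] b)) +
            1 • (D^[n + 1] a * D^[0] b) := by
        simp_rw [Nat.choose_succ_succ, Nat.succ_sub_succ, add_smul, sum_add_distrib]
      _ = ∑ k ∈ range n.succ.succ,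
            n.succ.choose k • (D^[n.succ - k] a * D^[k] b) := by
        rw [sum_range_succ' _ n.succ, Nat.choose_zero_right, tsub_zero]
    congr
    refine (sum_range_succ' _ _).trans (congr_arg₂ (· + ·) ?_ ?_)
    · rw [sum_range_succ, Nat.choose_succ_self, zero_smul, add_zero]
      refine sum_congr rfl fun k hk => ?_
      rw [mem_range] at hk
      congr
      omega
    · rw [Nat.choose_zero_right, tsub_zero]

theorem lnd_pow (x : B) (n : ℕ) :
    D (x ^ (n + 1)) = (n + 1 : ℕ) * x ^ n * D x := by
  induction n with
  | zero => simp [hD.2.1]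
  | succ n ih =>
    rw [pow_succ, hD.2.1, ih]
    push_cast
    ring

end aux

theorem lnd_charZero {B : Type*} [CommRing B] [IsDomain B] [Algebra ℚ B] : CharZero B :=
  charZero_of_injective_algebraMap (algebraMap ℚ B).injective

section domain

variable {B : Type*} [CommRing B] [IsDomain B] [Algebra ℚ B] {D : B → B} (hD : IsLND D)
include hD

/-- Units lie in the kernel of a locally nilpotent derivation. -/
theorem lnd_unit_ker {u : B} (hu : IsUnit u) : D u = 0 := by
  classical
  haveI := lnd_charZero (B := B)
  obtain ⟨w, rfl⟩ := hu
  -- minimal degrees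
  have key : ∀ x : B, x ≠ 0 → ∃ p : ℕ, D^[p + 1] x = 0 ∧ D^[p] x ≠ 0 := by
    intro x hx
    obtain ⟨n, hn⟩ := hD.2.2 x
    have hn' : ∃ p, D^[p + 1] x = 0 := ⟨n, lnd_iter_stable hD hn (Nat.le_succ n)⟩
    refine ⟨Nat.find hn', Nat.find_spec hn', ?_⟩
    rcases Nat.eq_zero_or_pos (Nat.find hn') with h0 | h0
    · rw [h0]; exact hx
    · have := Nat.find_min hn' (m := Nat.find hn' - 1) (by omega)
      rwa [Nat.sub_add_cancel h0] at this
  have hu0 : (w : B) ≠ 0 := Units.ne_zero w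
  have hv0 : ((w⁻¹ : Bˣ) : B) ≠ 0 := Units.ne_zero _
  obtain ⟨p, hp1, hp2⟩ := key _ hu0
  obtain ⟨q, hq1, hq2⟩ := key _ hv0
  by_contra hDu
  have hppos : 0 < p := by
    rcases Nat.eq_zero_or_pos p with h | h
    · exfalso; apply hDu; rw [h] at hp1; simpa using hp1
    · exact h
  -- compute D^[p+q] (u * v) = choose • (D^p u * D^q v)
  have hmul : D^[p + q] ((w : B) * ((w⁻¹ : Bˣ) : B)) =
      (p + q).choose q • (D^[p] (w : B) * D^[q] ((w⁻¹ : Bˣ) : B)) := by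
    rw [lnd_iterate_mul hD]
    rw [Finset.sum_eq_single q]
    · have hpq : p + q - q = p := by omega
      rw [hpq]
    · intro k hk hkq
      rcases lt_or_ge k q with h | h
      · have : D^[p + q - k] (w : B) = 0 := by
          refine lnd_iter_stable hD hp1 (by omega)
        rw [this, zero_mul, smul_zero]
      · have hk' : q < k := lt_of_le_of_ne h (Ne.symm hkq)
        have : D^[k] ((w⁻¹ : Bˣ) : B) = 0 := lnd_iter_stable hD hq1 (by omega)
        rw [this, mul_zero, smul_zero]
    · intro h
      exfalso; apply h; rw [Finset.mem_range]; omega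
  rw [Units.mul_inv] at hmul
  have h1 : D^[p + q] (1 : B) = 0 := by
    have : D^[1] (1 : B) = 0 := by simpa using lnd_one hD
    exact lnd_iter_stable hD this (by omega)
  rw [h1] at hmul
  have hc : ((p + q).choose q : B) ≠ 0 := by
    exact_mod_cast Nat.cast_ne_zero.mpr (Nat.choose_pos (by omega)).ne'
  rw [nsmul_eq_mul] at hmul
  rcases mul_eq_zero.mp hmul.symm with h | h
  · exact hc h
  · rcases mul_eq_zero.mp h with h | h
    · exact hp2 h
    · exact hq2 h

theorem lnd_ratCast (q : ℚ) : D (algebraMap ℚ B q) = 0 := by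
  haveI := lnd_charZero (B := B)
  have hnat : ∀ n : ℕ, D (n : B) = 0 := by
    intro n
    have h : ((n : ℕ) : B) = n • (1 : B) := by simp
    rw [h, lnd_nsmul hD, lnd_one hD, smul_zero]
  have hden : (q.den : B) * D (algebraMap ℚ B q) = 0 := by
    have h1 : (q.den : B) * algebraMap ℚ B q = ((q.num : ℤ) : B) := by
      have : ((q.den : ℚ)) * q = (q.num : ℚ) := by
        rw [mul_comm]; exact_mod_cast Rat.mul_den_eq_num q
      calc (q.den : B) * algebraMap ℚ B q
          = algebraMap ℚ B ((q.den : ℚ) * q) := by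
            rw [map_mul, map_natCast]
        _ = algebraMap ℚ B (q.num : ℚ) := by rw [this]
        _ = ((q.num : ℤ) : B) := by rw [map_intCast]
    have h2 : D ((q.den : B) * algebraMap ℚ B q) = (q.den : B) * D (algebraMap ℚ B q) := by
      rw [hD.2.1, hnat q.den, zero_mul, add_zero]
    rw [← h2, h1]
    obtain ⟨n, hn | hn⟩ := Int.eq_nat_or_neg q.num
    · rw [hn]; push_cast; exact hnat n
    · rw [hn]; push_cast; rw [lnd_neg hD, hnat, neg_zero]
  have hden0 : (q.den : B) ≠ 0 := Nat.cast_ne_zero.mpr q.den_nz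
  exact (mul_eq_zero.mp hden).resolve_left hden0

end domain

/-- Slice Theorem: if `B` is a domain containing `ℚ`, `D` a locally nilpotent derivation
with kernel `A`, and `s ∈ B` with `D s` a unit, then `B = A[s]` is a polynomial ring in
the single variable `s` over `A`, i.e. the evaluation map `A[X] → B`, `X ↦ s`, is bijective. -/
theorem stmt5 {B : Type*} [CommRing B] [IsDomain B] [Algebra ℚ B]
    (D : B → B) (hD : IsLND D)
    (A : Subring B) (hA : (A : Set B) = {b : B | D b = 0})
    (s : B) (hs : IsUnit (D s)) :
    Function.Bijective (fun p : Polynomial ↥A => Polynomial.eval₂ A.subtype s p) := by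
  haveI : CharZero B := lnd_charZero (B := B)
  have memA : ∀ b : B, b ∈ A ↔ D b = 0 := fun b => by
    rw [← Subring.mem_carrier]
    exact Set.ext_iff.mp hA b
  set ev : Polynomial ↥A → B := fun p => Polynomial.eval₂ A.subtype s p with hev
  -- key derivative formula
  have key : ∀ p : Polynomial ↥A, D (ev p) = ev (derivative p) * D s := by
    intro p
    induction p using Polynomial.induction_on' with
    | add p q hp hq =>
      simp only [hev] at hp hq
      simp only [hev, eval₂_add, hD.1, map_add, hp, hq, add_mul]
    | monomial n a =>
      simp only [hev, eval₂_monomial, derivative_monomial]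
      cases n with
      | zero =>
        simp only [pow_zero, mul_one, Nat.cast_zero, mul_zero]
        have h : D ((a : B)) = 0 := (memA _).mp a.2
        simpa using h
      | succ m =>
        have hDa : D ((a : B) : B) = 0 := (memA _).mp a.2
        have hDa : D (A.subtype a) = 0 := hDa
        rw [hD.2.1, hDa, zero_mul, add_zero, lnd_pow hD]
        simp only [Nat.add_sub_cancel, eval₂_monomial, map_mul, map_natCast]
        push_cast
        ring
  have hevC : ∀ a : ↥A, ev (C a) = (a : B) := fun a => by simp [hev]
  have hevadd : ∀ p q, ev (p + q) = ev p + ev q := fun p q => by simp [hev, eval₂_add]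
  constructor
  · -- injectivity
    have main : ∀ n : ℕ, ∀ p : Polynomial ↥A, p.natDegree ≤ n → ev p = 0 → p = 0 := by
      intro n
      induction n with
      | zero =>
        intro p hdeg hp
        rw [Polynomial.eq_C_of_natDegree_le_zero hdeg] at hp ⊢
        rw [hevC] at hp
        have : p.coeff 0 = 0 := by exact_mod_cast hp
        rw [this, map_zero]
      | succ n ih =>
        intro p hdeg hp
        have hder : ev (derivative p) = 0 := by
          have h1 : D (ev p) = 0 := by rw [hp, lnd_zero hD]
          rw [key p] at h1
          rcases mul_eq_zero.mp h1 with h | h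
          · exact h
          · exact absurd h hs.ne_zero
        have hderdeg : (derivative p).natDegree ≤ n := by
          have := Polynomial.natDegree_derivative_le p
          omega
        have hd0 : derivative p = 0 := ih _ hderdeg hder
        haveI : CharZero ↥A := by
          constructor
          intro a b h
          have : ((a : ℕ) : B) = ((b : ℕ) : B) := by
            have := congrArg A.subtype h
            simpa using this
          exact_mod_cast this
        have hpdeg : p.natDegree = 0 := Polynomial.natDegree_eq_zero_of_derivative_eq_zero hd0
        rw [Polynomial.eq_C_of_natDegree_le_zero (le_of_eq hpdeg)] at hp ⊢
        rw [hevC] at hp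
        have : p.coeff 0 = 0 := by exact_mod_cast hp
        rw [this, map_zero]
    intro p q hpq
    have : ev (p - q) = 0 := by
      simp only [hev] at hpq ⊢
      rw [eval₂_sub, hpq, sub_self]
    have := main (p - q).natDegree (p - q) le_rfl this
    exact sub_eq_zero.mp this
  · -- surjectivity
    -- D s is a unit with D (D s) = 0, so D s ∈ A and its inverse ∈ A
    have hu : D (D s) = 0 := lnd_unit_ker hD hs
    set u := hs.unit
    have hvmul : (u : B) * ((u⁻¹ : Bˣ) : B) = 1 := Units.mul_inv u
    have hDv : D ((u⁻¹ : Bˣ) : B) = 0 := lnd_unit_ker hD (u⁻¹ : Bˣ).isUnit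
    have hvA : ((u⁻¹ : Bˣ) : B) ∈ A := (memA _).mpr hDv
    -- rational inverses in A
    have hinvA : ∀ k : ℕ, algebraMap ℚ B (1 / (k + 1 : ℚ)) ∈ A :=
      fun k => (memA _).mpr (lnd_ratCast hD _)
    set c : ℕ → ↥A := fun k => ⟨algebraMap ℚ B (1 / (k + 1 : ℚ)), hinvA k⟩ with hc
    have hck : ∀ k : ℕ, c k * ((k : ↥A) + 1) = 1 := by
      intro k
      apply Subtype.ext
      push_cast
      show algebraMap ℚ B (1 / (k + 1 : ℚ)) * ((k : B) + 1) = 1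
      have : ((k : B) + 1) = algebraMap ℚ B ((k : ℚ) + 1) := by
        rw [map_add, map_natCast, map_one]
      rw [this, ← map_mul]
      rw [one_div, inv_mul_cancel₀, map_one]
      positivity
    -- integration operator
    set integ : Polynomial ↥A → Polynomial ↥A :=
      fun q => q.sum fun k a => C (c k * a) * X ^ (k + 1) with hinteg
    have hintegder : ∀ q : Polynomial ↥A, derivative (integ q) = q := by
      intro q
      conv_rhs => rw [← Polynomial.sum_C_mul_X_pow_eq q]
      simp only [hinteg]
      rw [Polynomial.sum_def, Polynomial.sum_def, map_sum]
      refine Finset.sum_congr rfl fun k _ => ?_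
      rw [derivative_C_mul, derivative_X_pow, Nat.add_sub_cancel, ← mul_assoc, ← C_mul]
      congr 1
      have hcast : ((k + 1 : ℕ) : ↥A) = (k : ↥A) + 1 := by push_cast; ring
      rw [hcast, mul_comm (c k) (q.coeff k), mul_assoc, hck, mul_one]
    -- main induction on nilpotency degree
    have main : ∀ n : ℕ, ∀ b : B, D^[n] b = 0 → ∃ p, ev p = b := by
      intro n
      induction n with
      | zero =>
        intro b hb
        have hb' : b = 0 := hb
        exact ⟨0, by simp [hev, hb']⟩
      | succ n ih =>
        intro b hb
        have : D^[n] (D b) = 0 := by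
          rw [← Function.iterate_succ_apply]; exact hb
        obtain ⟨q, hq⟩ := ih (D b) this
        -- P = integ (C v * q), v = u⁻¹
        set v : ↥A := ⟨((u⁻¹ : Bˣ) : B), hvA⟩ with hv
        set P := integ (C v * q) with hP
        have hDP : D (ev P) = D b := by
          rw [key, hP, hintegder]
          have : ev (C v * q) = (v : B) * ev q := by
            simp only [hev]
            rw [eval₂_mul, eval₂_C]
            rfl
          have hv' : (v : B) = ((u⁻¹ : Bˣ) : B) := rfl
          have hus : (u : B) = D s := hs.unit_spec
          rw [this, hq, ← hus, hv']
          calc ((u⁻¹:Bˣ):B) * D b * (u:B) = ((u⁻¹:Bˣ):B) * (u:B) * D b := by ring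
            _ = D b := by rw [Units.inv_mul, one_mul]
        have hbP : b - ev P ∈ A := by
          rw [memA, lnd_sub hD, hDP, sub_self]
        refine ⟨P + C ⟨b - ev P, hbP⟩, ?_⟩
        rw [hevadd, hevC]
        ring
    intro b
    obtain ⟨n, hn⟩ := hD.2.2 b
    exact main n b hn
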